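/- Let q be a prime power, let b be a positive integer, and let H_Y be the Hilbert function of the set Y of F_q-rational points of P(1,1,b). Then for every natural number d with d ≥ qb + q − b, one has H_Y(d) = q(q+1) + 1 if b divides d, and H_Y(d) = q(q+1) otherwise. (That is, the Hilbert quasi-polynomial of Y, valid for all d > (q−1)(b+1), takes the value q(q+1)+1 on multiples of b and q(q+1) on non-multiples of b.) -/

import Mathlib

open MvPolynomial

noncomputable section

variable (F : Type) [Field F] [Fintype F]

/-- The submodule of polynomials vanishing at every nonzero point of `F³`. -/
def vanishing : Submodule F (MvPolynomial (Fin 3) F) where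
  carrier := {f | ∀ y : Fin 3 → F, y ≠ 0 → eval y f = 0}
  add_mem' := fun hf hg y hy => by simp [hf y hy, hg y hy]
  zero_mem' := fun y hy => by simp
  smul_mem' := fun c f hf y hy => by simp [MvPolynomial.smul_eval, hf y hy]

/-- `S_d`: the degree-`d` weighted-homogeneous piece (weights `1, 1, b`). -/
def Sd (b d : ℕ) : Submodule F (MvPolynomial (Fin 3) F) :=
  weightedHomogeneousSubmodule F ![1, 1, b] d

/-- `I_d`: the degree-`d` piece of the vanishing ideal of `ℙ(1,1,b)(F_q)`. -/
def Id' (b d : ℕ) : Submodule F (MvPolynomial (Fin 3) F) := Sd F b d ⊓ vanishing F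

/-- The Hilbert function `H_Y(d) = dim S_d − dim I_d` of `Y = ℙ(1,1,b)(F_q)`. -/
def HY (b d : ℕ) : ℕ :=
  Module.finrank F ↥(Sd F b d) - Module.finrank F ↥(Id' F b d)

namespace P11b

/-- Evaluation at all nonzero points, as a linear map. -/
def E : MvPolynomial (Fin 3) F →ₗ[F] ({y : Fin 3 → F // y ≠ 0} → F) :=
  LinearMap.pi fun y =>
    { toFun := fun f => eval y.1 f
      map_add' := fun f g => by simp
      map_smul' := fun c f => by simp [MvPolynomial.smul_eval] }

variable {F}

lemma E_apply (f : MvPolynomial (Fin 3) F) (y : {y : Fin 3 → F // y ≠ 0}) :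
    E F f y = eval y.1 f := rfl

lemma ker_E : LinearMap.ker (E F) = vanishing F := by
  ext f
  constructor
  · intro h y hy
    have := congrFun (LinearMap.mem_ker.mp h) ⟨y, hy⟩
    simpa [E_apply] using this
  · intro h
    rw [LinearMap.mem_ker]
    funext y
    exact h y.1 y.2

lemma mem_Sd {b d : ℕ} {f : MvPolynomial (Fin 3) F} :
    f ∈ Sd F b d ↔ f.IsWeightedHomogeneous ![1, 1, b] d := Iff.rfl

lemma weight_apply3 (b : ℕ) (m : Fin 3 →₀ ℕ) :
    (Finsupp.weight ![1, 1, b]) m = m 0 + m 1 + m 2 * b := by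
  rw [Finsupp.weight_apply, Finsupp.sum_fintype]
  · simp [Fin.sum_univ_three]
  · intro i; simp

lemma fd_Sd {b d : ℕ} (hb : 0 < b) : FiniteDimensional F (Sd F b d) := by
  apply Submodule.finiteDimensional_of_le (S₂ := restrictTotalDegree (Fin 3) F d)
  intro f hf
  rw [mem_restrictTotalDegree]
  apply Finset.sup_le
  intro m hm
  have hw := (mem_Sd.mp hf) (mem_support_iff.mp hm)
  rw [weight_apply3] at hw
  have h2 : (m.sum fun _ e => e) = m 0 + m 1 + m 2 := by
    rw [Finsupp.sum_fintype]
    · simp [Fin.sum_univ_three]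
    · intro i; rfl
  show (m.sum fun _ e => e) ≤ d
  rw [h2]
  have : m 2 ≤ m 2 * b := Nat.le_mul_of_pos_right _ hb
  omega

set_option synthInstance.maxHeartbeats 1000000 in
lemma HY_eq {b d : ℕ} (hb : 0 < b) :
    HY F b d = Module.finrank F ((Sd F b d).map (E F)) := by
  have := fd_Sd (F := F) (d := d) hb
  set L : Sd F b d →ₗ[F] ({y : Fin 3 → F // y ≠ 0} → F) := (E F).comp (Sd F b d).subtype with hL
  have h1 : LinearMap.range L = (Sd F b d).map (E F) := by
    rw [hL, LinearMap.range_comp, Submodule.range_subtype]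
  have h2 : LinearMap.ker L = Submodule.comap (Sd F b d).subtype (Id' F b d) := by
    rw [hL, LinearMap.ker_comp, ker_E]
    ext x
    simp only [Submodule.mem_comap, Id', Submodule.mem_inf]
    exact ⟨fun h => ⟨x.2, h⟩, fun h => h.2⟩
  have h3 : Module.finrank F (LinearMap.ker L) = Module.finrank F (Id' F b d) := by
    rw [h2]
    exact (Submodule.comapSubtypeEquivOfLe (inf_le_left : Id' F b d ≤ Sd F b d)).finrank_eq
  have h4 := LinearMap.finrank_range_add_finrank_ker L
  rw [h1, h3] at h4
  unfold HY
  omega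

lemma eval_scale {b d : ℕ} {f : MvPolynomial (Fin 3) F}
    (hf : f.IsWeightedHomogeneous ![1, 1, b] d) (l : F) (y : Fin 3 → F) :
    eval (fun i => l ^ (![1, 1, b] i : ℕ) * y i) f = l ^ d * eval y f := by
  rw [eval_eq', eval_eq', Finset.mul_sum]
  refine Finset.sum_congr rfl fun m hm => ?_
  have hw : m 0 + m 1 + m 2 * b = d := by
    rw [← hf (mem_support_iff.mp hm), weight_apply3]
  rw [Fin.prod_univ_three, Fin.prod_univ_three]
  show coeff m f * ((l ^ (1:ℕ) * y 0) ^ m 0 * (l ^ (1:ℕ) * y 1) ^ m 1 * (l ^ b * y 2) ^ m 2)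
      = l ^ d * (coeff m f * (y 0 ^ m 0 * y 1 ^ m 1 * y 2 ^ m 2))
  rw [← hw]
  ring

lemma single2_eq {b d : ℕ} (hb : 0 < b) (m : Fin 3 →₀ ℕ) (hm0 : m 0 = 0) (hm1 : m 1 = 0)
    (hmw : m 0 + m 1 + m 2 * b = d) : m = Finsupp.single 2 (d / b) := by
  have hm2 : m 2 = d / b := by
    have : m 2 * b = d := by omega
    rw [← this, Nat.mul_div_cancel _ hb]
  ext i
  fin_cases i <;> simp [Finsupp.single_apply, hm0, hm1, hm2]

lemma eval_line_dvd {b d : ℕ} {f : MvPolynomial (Fin 3) F}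
    (hf : f.IsWeightedHomogeneous ![1, 1, b] d) (hb : 0 < b) (hbd : b ∣ d) (t : F) :
    eval ![0, 0, t] f = coeff (Finsupp.single 2 (d / b)) f * t ^ (d / b) := by
  rw [eval_eq']
  rw [Finset.sum_eq_single (Finsupp.single 2 (d / b))]
  · congr 1
    rw [Fin.prod_univ_three]
    simp [Finsupp.single_apply]
  · intro m hm hne
    have hw : m 0 + m 1 + m 2 * b = d := by
      rw [← hf (mem_support_iff.mp hm), weight_apply3]
    have hor : m 0 ≠ 0 ∨ m 1 ≠ 0 := by
      by_contra h
      push_neg at h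
      exact hne (single2_eq hb m h.1 h.2 hw)
    rw [Fin.prod_univ_three]
    rcases hor with h | h
    · simp [zero_pow h]
    · simp [zero_pow h]
  · intro h
    rw [notMem_support_iff.mp h, zero_mul]

lemma eval_line_not_dvd {b d : ℕ} {f : MvPolynomial (Fin 3) F}
    (hf : f.IsWeightedHomogeneous ![1, 1, b] d) (hbd : ¬ b ∣ d) (t : F) :
    eval ![0, 0, t] f = 0 := by
  rw [eval_eq']
  apply Finset.sum_eq_zero
  intro m hm
  have hw : m 0 + m 1 + m 2 * b = d := by
    rw [← hf (mem_support_iff.mp hm), weight_apply3]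
  have hor : m 0 ≠ 0 ∨ m 1 ≠ 0 := by
    by_contra h
    push_neg at h
    exact hbd ⟨m 2, by rw [mul_comm]; omega⟩
  rw [Fin.prod_univ_three]
  rcases hor with h | h
  · simp [zero_pow h]
  · simp [zero_pow h]

lemma vanish_all {b d : ℕ} (hb : 0 < b) {f : MvPolynomial (Fin 3) F}
    (hf : f.IsWeightedHomogeneous ![1, 1, b] d)
    (h1 : ∀ a c : F, eval ![1, a, c] f = 0)
    (h2 : ∀ c : F, eval ![0, 1, c] f = 0)
    (h3 : b ∣ d → eval ![0, 0, 1] f = 0) :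
    ∀ y : Fin 3 → F, y ≠ 0 → eval y f = 0 := by
  intro y hy
  by_cases h0 : y 0 ≠ 0
  · have key := eval_scale hf (y 0) ![1, y 1 / y 0, y 2 / y 0 ^ b]
    have heq : (fun i => (y 0) ^ (![1, 1, b] i : ℕ) * ![1, y 1 / y 0, y 2 / y 0 ^ b] i) = y := by
      funext i
      fin_cases i
      · show y 0 ^ (1:ℕ) * 1 = y 0; simp
      · show y 0 ^ (1:ℕ) * (y 1 / y 0) = y 1
        rw [pow_one, mul_comm, div_mul_cancel₀ _ h0]
      · show y 0 ^ b * (y 2 / y 0 ^ b) = y 2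
        rw [mul_comm, div_mul_cancel₀ _ (pow_ne_zero _ h0)]
    rw [heq, h1, mul_zero] at key
    exact key
  push_neg at h0
  by_cases h1' : y 1 ≠ 0
  · have key := eval_scale hf (y 1) ![0, 1, y 2 / y 1 ^ b]
    have heq : (fun i => (y 1) ^ (![1, 1, b] i : ℕ) * ![0, 1, y 2 / y 1 ^ b] i) = y := by
      funext i
      fin_cases i
      · show y 1 ^ (1:ℕ) * 0 = y 0; simp [h0]
      · show y 1 ^ (1:ℕ) * 1 = y 1; simp
      · show y 1 ^ b * (y 2 / y 1 ^ b) = y 2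
        rw [mul_comm, div_mul_cancel₀ _ (pow_ne_zero _ h1')]
    rw [heq, h2, mul_zero] at key
    exact key
  push_neg at h1'
  have hyy : y = ![0, 0, y 2] := by
    funext i
    fin_cases i
    · exact h0
    · exact h1'
    · rfl
  rw [hyy]
  by_cases hdvd : b ∣ d
  · rw [eval_line_dvd hf hb hdvd]
    have hc := h3 hdvd
    rw [eval_line_dvd hf hb hdvd 1, one_pow, mul_one] at hc
    rw [hc, zero_mul]
  · exact eval_line_not_dvd hf hdvd _

lemma wh_sub {w : Fin 3 → ℕ} {φ ψ : MvPolynomial (Fin 3) F} {m : ℕ}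
    (h1 : φ.IsWeightedHomogeneous w m) (h2 : ψ.IsWeightedHomogeneous w m) :
    (φ - ψ).IsWeightedHomogeneous w m := by
  intro dd hd
  rw [coeff_sub] at hd
  by_cases h : coeff dd φ ≠ 0
  · exact h1 h
  · push_neg at h
    rw [h, zero_sub, neg_ne_zero] at hd
    exact h2 hd

lemma wh_pow {w : Fin 3 → ℕ} {φ : MvPolynomial (Fin 3) F} {m : ℕ}
    (h : φ.IsWeightedHomogeneous w m) (n : ℕ) :
    (φ ^ n).IsWeightedHomogeneous w (n * m) := by
  induction n with
  | zero => simpa using isWeightedHomogeneous_one F w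
  | succ n ih =>
      rw [pow_succ, Nat.succ_mul]
      exact ih.mul h

variable (F) in
/-- Delta-like weighted homogeneous polynomials for the free orbits. -/
def Pfree (b k e : ℕ) : (F × F) ⊕ F → MvPolynomial (Fin 3) F
  | .inl (a, c) =>
      X 0 ^ e * (X 0 ^ k - (X 1 - C a * X 0) ^ k) *
        (X 0 ^ (b * k) - (X 2 - C c * X 0 ^ b) ^ k)
  | .inr c =>
      X 1 ^ e * (X 1 ^ k - X 0 ^ k) *
        (X 1 ^ (b * k) - (X 2 - C c * X 1 ^ b) ^ k)

lemma X0_wh (b : ℕ) : (X 0 : MvPolynomial (Fin 3) F).IsWeightedHomogeneous ![1, 1, b] 1 :=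
  isWeightedHomogeneous_X F _ 0

lemma X1_wh (b : ℕ) : (X 1 : MvPolynomial (Fin 3) F).IsWeightedHomogeneous ![1, 1, b] 1 :=
  isWeightedHomogeneous_X F _ 1

lemma X2_wh (b : ℕ) : (X 2 : MvPolynomial (Fin 3) F).IsWeightedHomogeneous ![1, 1, b] b :=
  isWeightedHomogeneous_X F _ 2

lemma Pfree_mem {b d k e : ℕ} (hd : e + k + b * k = d) (j : (F × F) ⊕ F) :
    Pfree F b k e j ∈ Sd F b d := by
  rw [mem_Sd]
  have hX0 := X0_wh (F := F) b
  have hX1 := X1_wh (F := F) b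
  have key : ∀ u v : MvPolynomial (Fin 3) F, u.IsWeightedHomogeneous ![1, 1, b] 1 →
      v.IsWeightedHomogeneous ![1, 1, b] 1 → ∀ a c : F,
      (u ^ e * (u ^ k - (v - C a * u) ^ k) *
        (u ^ (b * k) - (X 2 - C c * u ^ b) ^ k)).IsWeightedHomogeneous ![1, 1, b] d := by
    intro u v hu hv a c
    have t1 : (u ^ e).IsWeightedHomogeneous ![1, 1, b] e := by simpa using wh_pow hu e
    have t2 : (u ^ k - (v - C a * u) ^ k).IsWeightedHomogeneous ![1, 1, b] k := by
      apply wh_sub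
      · simpa using wh_pow hu k
      · have hsub : (v - C a * u).IsWeightedHomogeneous ![1, 1, b] 1 :=
          wh_sub hv (by simpa using (isWeightedHomogeneous_C ![1, 1, b] a).mul hu)
        simpa using wh_pow hsub k
    have t3 : (u ^ (b * k) - (X 2 - C c * u ^ b) ^ k).IsWeightedHomogeneous ![1, 1, b] (b * k) := by
      apply wh_sub
      · simpa using wh_pow hu (b * k)
      · have hsub : (X 2 - C c * u ^ b).IsWeightedHomogeneous ![1, 1, b] b := by
          apply wh_sub (X2_wh b)
          have := (isWeightedHomogeneous_C (R := F) ![1, 1, b] c).mul (wh_pow hu b)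
          simpa using this
        have := wh_pow hsub k
        rwa [mul_comm k b] at this
    have := (t1.mul t2).mul t3
    rwa [hd] at this
  rcases j with ⟨a, c⟩ | c
  · exact key (X 0) (X 1) hX0 hX1 a c
  · have := key (X 1) (X 0) hX1 hX0 0 c
    simpa [Pfree] using this

lemma Q_mem {b d : ℕ} (hdvd : b ∣ d) :
    (X 2 ^ (d / b) : MvPolynomial (Fin 3) F) ∈ Sd F b d := by
  rw [mem_Sd]
  have := wh_pow (X2_wh (F := F) b) (d / b)
  rwa [Nat.div_mul_cancel hdvd] at this

section evals

variable {b k e : ℕ}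

lemma eval_inl_self (hk0 : k ≠ 0) (a c : F) :
    eval ![1, a, c] (Pfree F b k e (.inl (a, c))) = 1 := by
  simp [Pfree, sub_self, zero_pow hk0]

lemma eval_inl_ne (hk : ∀ x : F, x ≠ 0 → x ^ k = 1) {a c a' c' : F}
    (h : (a', c') ≠ (a, c)) :
    eval ![1, a', c'] (Pfree F b k e (.inl (a, c))) = 0 := by
  rcases not_and_or.mp (fun hh : a' = a ∧ c' = c => h (by rw [hh.1, hh.2])) with hne | hne
  · simp [Pfree, hk _ (sub_ne_zero.mpr hne), sub_self]
  · simp [Pfree, hk _ (sub_ne_zero.mpr hne), sub_self]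

lemma eval_inl_at0 (he : e ≠ 0) (a c v1 v2 : F) :
    eval ![0, v1, v2] (Pfree F b k e (.inl (a, c))) = 0 := by
  simp [Pfree, zero_pow he]

lemma eval_inr_free (hk : ∀ x : F, x ≠ 0 → x ^ k = 1) (he : e ≠ 0) (c a' c' : F) :
    eval ![1, a', c'] (Pfree F b k e (.inr c)) = 0 := by
  by_cases ha : a' = 0
  · subst ha
    simp [Pfree, zero_pow he]
  · simp [Pfree, hk a' ha, sub_self]

lemma eval_inr_self (hk0 : k ≠ 0) (c : F) :
    eval ![0, 1, c] (Pfree F b k e (.inr c)) = 1 := by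
  simp [Pfree, sub_self, zero_pow hk0]

lemma eval_inr_ne (hk : ∀ x : F, x ≠ 0 → x ^ k = 1) {c c' : F} (hne : c' ≠ c) :
    eval ![0, 1, c'] (Pfree F b k e (.inr c)) = 0 := by
  simp [Pfree, hk _ (sub_ne_zero.mpr hne), sub_self]

lemma eval_inr_at0 (he : e ≠ 0) (c v1 v2 : F) :
    eval ![0, 0, v2] (Pfree F b k e (.inr c)) = 0 := by
  simp [Pfree, zero_pow he]

end evals

variable (F) in
/-- Representatives of the free orbits, as nonzero points. -/
def pt : (F × F) ⊕ F → {y : Fin 3 → F // y ≠ 0}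
  | .inl (a, c) => ⟨![1, a, c], fun h => one_ne_zero (congrFun h 0)⟩
  | .inr c => ⟨![0, 1, c], fun h => one_ne_zero (congrFun h 1)⟩

variable (F) in
/-- The special point `(0,0,1)`. -/
def spt : {y : Fin 3 → F // y ≠ 0} := ⟨![0, 0, 1], fun h => one_ne_zero (congrFun h 2)⟩

lemma eval_pt_self (hk0 : k ≠ 0) (j : (F × F) ⊕ F) :
    eval (pt F j).1 (Pfree F b k e j) = 1 := by
  rcases j with ⟨a, c⟩ | c
  · exact eval_inl_self hk0 a c
  · exact eval_inr_self hk0 c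

lemma eval_pt_ne (hk : ∀ x : F, x ≠ 0 → x ^ k = 1) (hk0 : k ≠ 0) (he : e ≠ 0)
    {i j : (F × F) ⊕ F} (hne : i ≠ j) :
    eval (pt F j).1 (Pfree F b k e i) = 0 := by
  rcases i with ⟨a, c⟩ | c <;> rcases j with ⟨a', c'⟩ | c'
  · exact eval_inl_ne hk (fun h => hne (by rw [h]))
  · exact eval_inl_at0 he a c 1 c'
  · exact eval_inr_free hk he c a' c'
  · exact eval_inr_ne hk (fun h => hne (by rw [h]))

lemma eval_spt_Pfree (he : e ≠ 0) (j : (F × F) ⊕ F) :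
    eval (spt F).1 (Pfree F b k e j) = 0 := by
  rcases j with ⟨a, c⟩ | c
  · exact eval_inl_at0 he a c 0 1
  · exact eval_inr_at0 he c 0 1

lemma upper_dvd {b d : ℕ} (hb : 0 < b) :
    Module.finrank F ((Sd F b d).map (E F))
      ≤ Fintype.card F * Fintype.card F + Fintype.card F + 1 := by
  classical
  set W := (Sd F b d).map (E F) with hW
  set pts : ((F × F) ⊕ F) ⊕ Unit → {y : Fin 3 → F // y ≠ 0} :=
    Sum.elim (pt F) (fun _ => spt F) with hpts
  set Φ : ({y : Fin 3 → F // y ≠ 0} → F) →ₗ[F] ((((F × F) ⊕ F) ⊕ Unit) → F) :=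
    LinearMap.pi fun j => LinearMap.proj (pts j) with hΦ
  have hker : ∀ g ∈ W, Φ g = 0 → g = 0 := by
    intro g hg hg0
    obtain ⟨f, hf, rfl⟩ := Submodule.mem_map.mp hg
    have hv : ∀ j, eval (pts j).1 f = 0 := fun j => congrFun hg0 j
    funext y
    show eval y.1 f = 0
    refine vanish_all hb (mem_Sd.mp hf) ?_ ?_ ?_ y.1 y.2
    · intro a c; exact hv (.inl (.inl (a, c)))
    · intro c; exact hv (.inl (.inr c))
    · intro _; exact hv (.inr ())
  have hinj : Function.Injective (Φ.comp W.subtype) := by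
    rw [← LinearMap.ker_eq_bot, eq_bot_iff]
    rintro x hx
    have hx' : Φ x.1 = 0 := hx
    have := hker x.1 x.2 hx'
    simpa [Submodule.mem_bot] using Subtype.ext this
  have hle := LinearMap.finrank_le_finrank_of_injective hinj
  rw [Module.finrank_fintype_fun_eq_card] at hle
  simpa [Fintype.card_sum, Fintype.card_prod] using hle

lemma upper_not_dvd {b d : ℕ} (hb : 0 < b) (hdvd : ¬ b ∣ d) :
    Module.finrank F ((Sd F b d).map (E F))
      ≤ Fintype.card F * Fintype.card F + Fintype.card F := by
  classical
  set W := (Sd F b d).map (E F) with hW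
  set Φ : ({y : Fin 3 → F // y ≠ 0} → F) →ₗ[F] (((F × F) ⊕ F) → F) :=
    LinearMap.pi fun j => LinearMap.proj (pt F j) with hΦ
  have hker : ∀ g ∈ W, Φ g = 0 → g = 0 := by
    intro g hg hg0
    obtain ⟨f, hf, rfl⟩ := Submodule.mem_map.mp hg
    have hv : ∀ j, eval (pt F j).1 f = 0 := fun j => congrFun hg0 j
    funext y
    show eval y.1 f = 0
    refine vanish_all hb (mem_Sd.mp hf) ?_ ?_ ?_ y.1 y.2
    · intro a c; exact hv (.inl (a, c))
    · intro c; exact hv (.inr c)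
    · intro h; exact absurd h hdvd
  have hinj : Function.Injective (Φ.comp W.subtype) := by
    rw [← LinearMap.ker_eq_bot, eq_bot_iff]
    rintro x hx
    have hx' : Φ x.1 = 0 := hx
    have := hker x.1 x.2 hx'
    simpa [Submodule.mem_bot] using Subtype.ext this
  have hle := LinearMap.finrank_le_finrank_of_injective hinj
  rw [Module.finrank_fintype_fun_eq_card] at hle
  simpa [Fintype.card_sum, Fintype.card_prod] using hle

set_option synthInstance.maxHeartbeats 1000000 in
lemma lower_not_dvd {b d k e : ℕ} (he : e ≠ 0) (hk0 : k ≠ 0)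
    (hk : ∀ x : F, x ≠ 0 → x ^ k = 1) (hd : e + k + b * k = d) :
    Fintype.card F * Fintype.card F + Fintype.card F
      ≤ Module.finrank F ((Sd F b d).map (E F)) := by
  classical
  set W := (Sd F b d).map (E F) with hW
  set v : ((F × F) ⊕ F) → W :=
    fun j => ⟨E F (Pfree F b k e j), Submodule.mem_map_of_mem (Pfree_mem hd j)⟩ with hv
  have hli : LinearIndependent F v := by
    apply LinearIndependent.of_comp W.subtype
    rw [Fintype.linearIndependent_iff]
    intro g hg j
    have h := congrFun hg (pt F j)
    simp only [Finset.sum_apply, Function.comp_apply, Pi.smul_apply, smul_eq_mul,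
      Submodule.coe_subtype, hv, E_apply, Pi.zero_apply] at h
    rw [Finset.sum_eq_single j] at h
    · rwa [eval_pt_self hk0 j, mul_one] at h
    · intro i _ hne
      rw [eval_pt_ne hk hk0 he hne, mul_zero]
    · intro hj; exact absurd (Finset.mem_univ _) hj
  have hcard := hli.fintype_card_le_finrank
  simpa [Fintype.card_sum, Fintype.card_prod] using hcard

set_option synthInstance.maxHeartbeats 1000000 in
lemma lower_dvd {b d k e : ℕ} (hb : 0 < b) (he : e ≠ 0) (hk0 : k ≠ 0)
    (hk : ∀ x : F, x ≠ 0 → x ^ k = 1) (hd : e + k + b * k = d) (hdvd : b ∣ d) :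
    Fintype.card F * Fintype.card F + Fintype.card F + 1
      ≤ Module.finrank F ((Sd F b d).map (E F)) := by
  classical
  set W := (Sd F b d).map (E F) with hW
  set P : ((F × F) ⊕ F) ⊕ Unit → MvPolynomial (Fin 3) F :=
    Sum.elim (Pfree F b k e) (fun _ => X 2 ^ (d / b)) with hP
  have hPmem : ∀ j, P j ∈ Sd F b d := by
    rintro (j | u)
    · exact Pfree_mem hd j
    · exact Q_mem hdvd
  set pts : ((F × F) ⊕ F) ⊕ Unit → {y : Fin 3 → F // y ≠ 0} :=
    Sum.elim (pt F) (fun _ => spt F) with hpts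
  set v : (((F × F) ⊕ F) ⊕ Unit) → W :=
    fun j => ⟨E F (P j), Submodule.mem_map_of_mem (hPmem j)⟩ with hv
  have hli : LinearIndependent F v := by
    apply LinearIndependent.of_comp W.subtype
    rw [Fintype.linearIndependent_iff]
    intro g hg
    have hfun : ∀ y : {y : Fin 3 → F // y ≠ 0}, ∑ i, g i * eval y.1 (P i) = 0 := by
      intro y
      have h := congrFun hg y
      simpa only [Finset.sum_apply, Function.comp_apply, Pi.smul_apply, smul_eq_mul,
        Submodule.coe_subtype, hv, E_apply, Pi.zero_apply] using h
    have hspec : g (.inr ()) = 0 := by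
      have h := hfun (spt F)
      rw [Finset.sum_eq_single (Sum.inr ())] at h
      · have hQ : eval (spt F).1 (P (Sum.inr ())) = 1 := by
          show eval ![0, 0, 1] ((X 2 : MvPolynomial (Fin 3) F) ^ (d / b)) = 1
          simp
        rwa [hQ, mul_one] at h
      · rintro (i | ⟨⟩) _ hne
        · have : eval (spt F).1 (P (Sum.inl i)) = 0 := eval_spt_Pfree he i
          rw [this, mul_zero]
        · exact absurd rfl hne
      · intro hj; exact absurd (Finset.mem_univ _) hj
    rintro (j | ⟨⟩)
    · have h := hfun (pt F j)
      rw [Fintype.sum_sum_type] at h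
      have h2 : ∑ u : Unit, g (Sum.inr u) * eval (pt F j).1 (P (Sum.inr u)) = 0 := by
        simp [hspec]
      rw [h2, add_zero, Finset.sum_eq_single j] at h
      · have : eval (pt F j).1 (P (Sum.inl j)) = 1 := eval_pt_self hk0 j
        rwa [this, mul_one] at h
      · intro i _ hne
        have : eval (pt F j).1 (P (Sum.inl i)) = 0 := eval_pt_ne hk hk0 he hne
        rw [this, mul_zero]
      · intro hj; exact absurd (Finset.mem_univ _) hj
    · exact hspec
  have hcard := hli.fintype_card_le_finrank
  simpa [Fintype.card_sum, Fintype.card_prod] using hcard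

end P11b

/-- Theorem (Hilbert quasi-polynomial of `Y = ℙ(1,1,b)(F_q)`): for every
`d ≥ qb + q − b` (i.e. `d > (q−1)(b+1)`), `H_Y(d) = q(q+1)+1` if `b ∣ d` and
`H_Y(d) = q(q+1)` otherwise. -/
theorem hilbert_quasi_polynomial_P11b (q : ℕ) (hq : q = Fintype.card F)
    (b : ℕ) (hb : 0 < b) :
    ∀ d : ℕ, q * b + q - b ≤ d →
      HY F b d = if b ∣ d then q * (q + 1) + 1 else q * (q + 1) := by
  intro d hd
  have hq2 : 2 ≤ q := by rw [hq]; exact Fintype.one_lt_card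
  obtain ⟨k, hqk⟩ : ∃ k, q = k + 1 := ⟨q - 1, by omega⟩
  have hk0 : k ≠ 0 := by omega
  have hk : ∀ x : F, x ≠ 0 → x ^ k = 1 := by
    intro x hx
    have : k = Fintype.card F - 1 := by omega
    rw [this]
    exact FiniteField.pow_card_sub_one_eq_one x hx
  have hd' : k + b * k + 1 ≤ d := by
    have hmul : (k + 1) * b = k * b + b := by ring
    have hmul2 : b * k = k * b := by ring
    rw [hqk] at hd
    omega
  set e := d - (k + b * k) with hee
  have he : e ≠ 0 := by omega
  have hdeq : e + k + b * k = d := by omega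
  have hcard : Fintype.card F * Fintype.card F + Fintype.card F = q * (q + 1) := by
    rw [← hq]; ring
  rw [P11b.HY_eq hb]
  by_cases hdvd : b ∣ d
  · rw [if_pos hdvd]
    have hl := P11b.lower_dvd hb he hk0 hk hdeq hdvd
    have hu := P11b.upper_dvd (F := F) (b := b) (d := d) hb
    omega
  · rw [if_neg hdvd]
    have hl := P11b.lower_not_dvd he hk0 hk hdeq
    have hu := P11b.upper_not_dvd (F := F) hb hdvd
    omega

end
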